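/- If φ : (0,∞) → ℝ is differentiable, satisfies 0 < φ(s) < 1, and solves φ'(s) = (1/(2s)) (φ(s)² − 1) φ(s) for all s > 0, with lim_{s→0⁺} φ(s) = 1 and lim_{s→0⁺} (1−φ(s))/s finite and positive with value C/2, then φ(s) = (1 + Cs)^{-1/2} for all s > 0. -/

import Mathlib

open MeasureTheory Real Set Filter

theorem ode_unique_solution (C : ℝ) (hC : 0 < C) (φ : ℝ → ℝ)
    (hderiv : ∀ s : ℝ, 0 < s →
      HasDerivAt φ ((1 / (2 * s)) * ((φ s) ^ 2 - 1) * φ s) s)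
    (hbound : ∀ s : ℝ, 0 < s → 0 < φ s ∧ φ s < 1)
    (hlim1 : Tendsto φ (nhdsWithin 0 (Ioi 0)) (nhds 1))
    (hlim2 : Tendsto (fun s => (1 - φ s) / s) (nhdsWithin 0 (Ioi 0)) (nhds (C / 2))) :
    ∀ s : ℝ, 0 < s → φ s = (1 + C * s) ^ (-(1/2 : ℝ)) := by
  set g : ℝ → ℝ := fun s => (1 / (φ s) ^ 2 - 1) / s with hg
  have hgd : ∀ s : ℝ, 0 < s → HasDerivAt g 0 s := by
    intro s hs
    obtain ⟨hp, hl⟩ := hbound s hs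
    have hφ : φ s ≠ 0 := ne_of_gt hp
    have hs' : s ≠ 0 := ne_of_gt hs
    have h := hderiv s hs
    have h2 : HasDerivAt (fun t => 1 / (φ t) ^ 2 - 1)
        (-((2 : ℕ) * φ s ^ 1 * ((1 / (2 * s)) * ((φ s) ^ 2 - 1) * φ s)) / ((φ s) ^ 2) ^ 2) s := by
      simpa [one_div] using ((h.pow 2).inv (pow_ne_zero 2 hφ)).sub_const 1
    have h3 := h2.div (hasDerivAt_id s) hs'
    refine h3.congr_deriv ?_
    simp only [id]
    field_simp
    ring
  have hconst : ∀ a b : ℝ, 0 < a → 0 < b → g b = g a := by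
    have key : ∀ a b : ℝ, 0 < a → a ≤ b → g b = g a := by
      intro a b ha hab
      have := constant_of_has_deriv_right_zero (f := g) (a := a) (b := b)
        (fun x hx => ((hgd x (lt_of_lt_of_le ha hx.1)).continuousAt).continuousWithinAt)
        (fun x hx => ((hgd x (lt_of_lt_of_le ha hx.1)).hasDerivWithinAt))
      exact this b ⟨hab, le_refl b⟩
    intro a b ha hb
    rcases le_total a b with h | h
    · exact key a b ha h
    · exact (key b a hb h).symm
  have hglim : Tendsto g (nhdsWithin 0 (Ioi 0)) (nhds C) := by
    have h2 : Tendsto (fun s => (1 + φ s) / (φ s) ^ 2) (nhdsWithin 0 (Ioi 0)) (nhds 2) := by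
      have : Tendsto (fun s => (1 + φ s) / (φ s) ^ 2) (nhdsWithin 0 (Ioi 0))
          (nhds ((1 + 1) / 1 ^ 2)) := by
        exact Tendsto.div (tendsto_const_nhds.add hlim1) (hlim1.pow 2) (by norm_num)
      norm_num at this; exact this
    have hmul := hlim2.mul h2
    have heq : ∀ᶠ s in nhdsWithin 0 (Ioi 0),
        ((1 - φ s) / s) * ((1 + φ s) / (φ s) ^ 2) = g s := by
      filter_upwards [self_mem_nhdsWithin] with s hs
      obtain ⟨hp, _⟩ := hbound s hs
      have hs' : (s : ℝ) ≠ 0 := ne_of_gt hs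
      have hφ : φ s ≠ 0 := ne_of_gt hp
      simp only [hg]
      field_simp
      ring
    have : Tendsto g (nhdsWithin 0 (Ioi 0)) (nhds (C / 2 * 2)) :=
      hmul.congr' heq
    simpa [div_mul_cancel₀] using this
  intro s hs
  obtain ⟨hp, hl⟩ := hbound s hs
  have hgc : g s = C := by
    have hcg : Tendsto g (nhdsWithin 0 (Ioi 0)) (nhds (g s)) := by
      have : ∀ᶠ t in nhdsWithin 0 (Ioi 0), g t = g s := by
        filter_upwards [self_mem_nhdsWithin] with t ht
        exact hconst s t hs ht
      exact Tendsto.congr' (by filter_upwards [this] with t ht; exact ht.symm)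
        tendsto_const_nhds
    exact tendsto_nhds_unique hcg hglim
  have hφ : φ s ≠ 0 := ne_of_gt hp
  have hs' : s ≠ 0 := ne_of_gt hs
  have hpos : 0 < 1 + C * s := by positivity
  have hsq : (φ s) ^ 2 = (1 + C * s)⁻¹ := by
    have : (1 / (φ s) ^ 2 - 1) / s = C := hgc
    have h1 : 1 / (φ s) ^ 2 = 1 + C * s := by
      field_simp at this
      field_simp
      linarith
    field_simp at h1 ⊢
    linarith
  have : φ s = Real.sqrt ((1 + C * s)⁻¹) := by
    rw [← hsq, Real.sqrt_sq hp.le]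
  rw [this, Real.sqrt_eq_rpow, ← Real.rpow_neg_one (1 + C * s), ← Real.rpow_mul hpos.le]
  norm_num
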